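/- arXiv:math/0508615 — 3 statements merged into one kernel-verified Lean document; each statement's English description precedes it below -/
import Mathlib

section
/- Let φ : (ℂ,0) → (ℂ^n,0) be a nonzero analytic curve-germ and let P ⊆ ℂ^n be a linear subspace with ideal I(P). Then the tangent line to the image of φ at the origin lies in P if and only if φ*(I(P)) ⊆ m_1 φ*(m_n), where m_1 is the maximal ideal of O_1 and m_n the maximal ideal of O_n. -/
/- Statement 1 (Proposition 1.7): the tangent line to a curve germ lies in a linear
subspace `P` iff `φ*(I(P)) ⊆ m₁ φ*(m_n)`. -/

open Filter Topology

noncomputable section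

/-- `ℂ^n`. -/
abbrev Emc (n : ℕ) := Fin n → ℂ

/-- If `f` is analytic at `0` and `f t / t ^ m` tends to a finite limit `c` on a punctured
neighbourhood of `0`, then `f t = t ^ m * g t` with `g` analytic at `0` and `g 0 = c`. -/
lemma factor_of_tendsto {f : ℂ → ℂ} (hf : AnalyticAt ℂ f 0) {m : ℕ} {c : ℂ}
    (hlim : Tendsto (fun t => (t ^ m)⁻¹ * f t) (𝓝[≠] (0 : ℂ)) (𝓝 c)) :
    ∃ g : ℂ → ℂ, AnalyticAt ℂ g 0 ∧ g 0 = c ∧ ∀ᶠ t in 𝓝 (0 : ℂ), f t = t ^ m * g t := by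
  by_cases htop : analyticOrderAt f 0 = ⊤
  · have hzero : ∀ᶠ z in 𝓝 (0 : ℂ), f z = 0 := analyticOrderAt_eq_top.mp htop
    have h0 : Tendsto (fun t => (t ^ m)⁻¹ * f t) (𝓝[≠] (0 : ℂ)) (𝓝 0) := by
      apply Tendsto.congr' ?_ tendsto_const_nhds
      filter_upwards [hzero.filter_mono nhdsWithin_le_nhds] with t ht
      simp [ht]
    have hc : c = 0 := tendsto_nhds_unique hlim h0
    exact ⟨0, analyticAt_const, by simp [hc], by filter_upwards [hzero] with t ht; simp [ht]⟩
  · obtain ⟨k, hk⟩ := WithTop.ne_top_iff_exists.mp htop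
    obtain ⟨g', hg'an, hg'0, hg'eq⟩ := (hf.analyticOrderAt_eq_natCast (n := k)).mp hk.symm
    simp only [sub_zero, smul_eq_mul] at hg'eq
    -- first show `m ≤ k`
    have hmk : m ≤ k := by
      by_contra hlt
      push_neg at hlt
      -- g' t = (f t / t^m) * t^(m-k) → c * 0 = 0, contradicting g' 0 ≠ 0
      have h1 : Tendsto (fun t : ℂ => ((t ^ m)⁻¹ * f t) * t ^ (m - k)) (𝓝[≠] (0 : ℂ))
          (𝓝 (c * 0)) := by
        refine hlim.mul ?_
        have : Tendsto (fun t : ℂ => t ^ (m - k)) (𝓝 (0 : ℂ)) (𝓝 ((0 : ℂ) ^ (m - k))) :=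
          (continuous_pow (m - k)).tendsto 0
        rw [zero_pow (by omega)] at this
        exact this.mono_left nhdsWithin_le_nhds
      have h2 : Tendsto g' (𝓝[≠] (0 : ℂ)) (𝓝 (g' 0)) :=
        (hg'an.continuousAt.tendsto).mono_left nhdsWithin_le_nhds
      have h3 : Tendsto g' (𝓝[≠] (0 : ℂ)) (𝓝 (c * 0)) := by
        refine h1.congr' ?_
        filter_upwards [hg'eq.filter_mono nhdsWithin_le_nhds,
          self_mem_nhdsWithin] with t ht (ht0 : t ≠ 0)
        have htm : (t : ℂ) ^ m ≠ 0 := pow_ne_zero _ ht0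
        have hsplit : (t : ℂ) ^ m = t ^ k * t ^ (m - k) := by
          rw [← pow_add]; congr 1; omega
        rw [ht, hsplit]
        field_simp
      exact hg'0 (by simpa using tendsto_nhds_unique h2 h3)
    refine ⟨fun t => t ^ (k - m) * g' t, ?_, ?_, ?_⟩
    · exact ((analyticAt_id.pow _)).mul hg'an
    · -- g 0 = c via uniqueness of the limit
      have h2 : Tendsto (fun t => t ^ (k - m) * g' t) (𝓝[≠] (0 : ℂ))
          (𝓝 ((0 : ℂ) ^ (k - m) * g' 0)) :=
        (((continuous_pow (k - m)).continuousAt.mul hg'an.continuousAt).tendsto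
          ).mono_left nhdsWithin_le_nhds
      have h3 : Tendsto (fun t => (t ^ m)⁻¹ * f t) (𝓝[≠] (0 : ℂ))
          (𝓝 ((0 : ℂ) ^ (k - m) * g' 0)) := by
        refine h2.congr' ?_
        filter_upwards [hg'eq.filter_mono nhdsWithin_le_nhds,
          self_mem_nhdsWithin] with t ht (ht0 : t ≠ 0)
        rw [ht]
        have : t ^ k = t ^ m * t ^ (k - m) := by rw [← pow_add]; congr 1; omega
        rw [this]
        field_simp
      exact (tendsto_nhds_unique hlim h3).symm
    · filter_upwards [hg'eq] with t ht
      rw [ht, ← mul_assoc, ← pow_add]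
      congr 2
      omega

/-- **Proposition 1.7.**  Let `φ : (ℂ,0) → (ℂ^n,0)` be a nonzero analytic curve germ, with
tangent direction `v ≠ 0` at the origin (i.e. `φ(t)/t^l → v` where `l` is the minimal order
of vanishing of the components of `φ`), and let `P` be a linear subspace.  Then the tangent
line of `φ` at the origin lies in `P` iff `φ*(I(P)) ⊆ m₁ φ*(m_n)`, i.e. iff for every
analytic germ `h` vanishing on `P`, `h ∘ φ` is a combination `∑ aᵢ · (φᵢ)` with analytic
coefficients `aᵢ` vanishing at `0`. -/
theorem statement1 {n : ℕ} (φ : ℂ → Emc n) (hφ : AnalyticAt ℂ φ 0) (hφ0 : φ 0 = 0)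
    (P : Submodule ℂ (Emc n))
    (l : ℕ) (hl : 1 ≤ l) (v : Emc n) (hv : v ≠ 0)
    (hlim : Tendsto (fun t => (t ^ l)⁻¹ • φ t) (𝓝[≠] (0 : ℂ)) (𝓝 v)) :
    v ∈ P ↔
      ∀ h : Emc n → ℂ, AnalyticAt ℂ h 0 → (∀ᶠ z in 𝓝 (0 : Emc n), z ∈ P → h z = 0) →
        ∃ a : Fin n → ℂ → ℂ, (∀ i, AnalyticAt ℂ (a i) 0 ∧ a i 0 = 0) ∧
          ∀ᶠ t in 𝓝 (0 : ℂ), h (φ t) = ∑ i, a i t * φ t i := by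
  constructor
  · -- forward direction
    intro hvP h hh hP0
    have h0 : h 0 = 0 := hP0.self_of_nhds P.zero_mem
    set L := fderiv ℂ h 0 with hLdef
    have hd : HasFDerivAt h L 0 := hh.differentiableAt.hasFDerivAt
    -- the derivative of `h` at `0` kills `v`
    have hLv : L v = 0 := by
      have htend : Tendsto (fun s : ℂ => s • v) (𝓝 0) (𝓝 0) := by
        have : Tendsto (fun s : ℂ => s • v) (𝓝 0) (𝓝 ((0 : ℂ) • v)) :=
          (continuous_id.smul (continuous_const (y := v))).tendsto (0 : ℂ)
        simpa using this
      have hcurve : ∀ᶠ s in 𝓝 (0 : ℂ), h (s • v) = 0 := by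
        filter_upwards [htend.eventually hP0] with s hs
        exact hs (P.smul_mem s hvP)
      have hg : HasDerivAt (fun s : ℂ => s • v) v 0 := by
        simpa using (hasDerivAt_id (0 : ℂ)).smul_const v
      have hd' : HasFDerivAt h L ((0 : ℂ) • v) := by rwa [zero_smul]
      have hρ : HasDerivAt (fun s : ℂ => h (s • v)) (L v) 0 := hd'.comp_hasDerivAt 0 hg
      have hρ' : HasDerivAt (fun s : ℂ => h (s • v)) 0 0 := by
        refine (hasDerivAt_const (0 : ℂ) (0 : ℂ)).congr_of_eventuallyEq ?_
        filter_upwards [hcurve] with s hs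
        simpa using hs
      exact hρ.unique hρ'
    have hh' : AnalyticAt ℂ h (φ 0) := by rwa [hφ0]
    have hF : AnalyticAt ℂ (fun t => h (φ t)) 0 := hh'.comp hφ
    have hφt : Tendsto φ (𝓝 0) (𝓝 0) := by
      have := hφ.continuousAt.tendsto
      rwa [hφ0] at this
    have o1 : (fun z => h z - L z) =o[𝓝 (0 : Emc n)] (fun z => z) := by
      have := hd.isLittleO
      simpa [h0] using this
    have o2 : (fun t => h (φ t) - L (φ t)) =o[𝓝 (0 : ℂ)] (fun t => φ t) :=
      o1.comp_tendsto hφt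
    have bigO : (fun t => φ t) =O[𝓝[≠] (0 : ℂ)] (fun t : ℂ => t ^ l) := by
      have h1 : (fun t : ℂ => (t ^ l)⁻¹ • φ t) =O[𝓝[≠] (0 : ℂ)] (fun _ => (1 : ℂ)) :=
        hlim.isBigO_one ℂ
      have h2 : (fun t : ℂ => t ^ l) =O[𝓝[≠] (0 : ℂ)] (fun t : ℂ => t ^ l) := Asymptotics.isBigO_refl _ _
      refine (h2.smul h1).congr' ?_ ?_
      · filter_upwards [self_mem_nhdsWithin] with t (ht : t ≠ 0)
        simp [smul_smul, mul_inv_cancel₀ (pow_ne_zero l ht)]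
      · filter_upwards with t
        simp
    have o3 : (fun t => h (φ t) - L (φ t)) =o[𝓝[≠] (0 : ℂ)] (fun t : ℂ => t ^ l) :=
      (o2.mono nhdsWithin_le_nhds).trans_isBigO bigO
    have T1 : Tendsto (fun t : ℂ => (h (φ t) - L (φ t)) / t ^ l) (𝓝[≠] 0) (𝓝 0) :=
      o3.tendsto_div_nhds_zero
    have T2 : Tendsto (fun t : ℂ => (t ^ l)⁻¹ * L (φ t)) (𝓝[≠] 0) (𝓝 0) := by
      have h1 := (L.continuous.tendsto v).comp hlim
      rw [hLv] at h1
      refine h1.congr fun t => ?_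
      simp [Function.comp, map_smul, smul_eq_mul]
    have TF : Tendsto (fun t : ℂ => (t ^ l)⁻¹ * h (φ t)) (𝓝[≠] 0) (𝓝 0) := by
      have := T1.add T2
      rw [add_zero] at this
      refine this.congr fun t => ?_
      rw [div_eq_inv_mul]
      ring
    obtain ⟨g, hgan, hg0, hgeq⟩ := factor_of_tendsto hF TF
    obtain ⟨j, hj⟩ : ∃ j, v j ≠ 0 := Function.ne_iff.mp hv
    have hφj : AnalyticAt ℂ (fun t => φ t j) 0 := analyticAt_pi_iff.mp hφ j
    have hlimj : Tendsto (fun t : ℂ => (t ^ l)⁻¹ * φ t j) (𝓝[≠] 0) (𝓝 (v j)) := by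
      have := ((continuous_apply j).tendsto v).comp hlim
      refine this.congr fun t => ?_
      simp [Function.comp]
    obtain ⟨ψ, hψan, hψ0, hψeq⟩ := factor_of_tendsto hφj hlimj
    have hψ0' : ψ 0 ≠ 0 := by rw [hψ0]; exact hj
    refine ⟨fun i => if i = j then (fun t => g t / ψ t) else (fun _ => 0), ?_, ?_⟩
    · intro i
      by_cases hij : i = j
      · exact ⟨by simp only [hij, if_pos rfl, ite_true]; exact hgan.div hψan hψ0', by simp [hij, hg0]⟩
      · exact ⟨by simpa [hij] using (analyticAt_const :
          AnalyticAt ℂ (fun _ : ℂ => (0 : ℂ)) 0), by simp [hij]⟩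
    · filter_upwards [hgeq, hψeq, hψan.continuousAt.eventually_ne hψ0'] with t hgt hψt hψne
      rw [Fintype.sum_eq_single j (fun i hij => by simp [if_neg hij])]
      simp only [if_pos rfl, ite_true]
      rw [hgt, hψt]
      field_simp
  · -- reverse direction
    intro hyp
    by_contra hvP
    have hqv : P.mkQ v ≠ 0 := by
      simpa [Submodule.Quotient.mk_eq_zero] using hvP
    obtain ⟨f, hf⟩ : ∃ f : Module.Dual ℂ (Emc n ⧸ P), f (P.mkQ v) ≠ 0 := by
      by_contra hc
      push_neg at hc
      exact hqv ((Module.forall_dual_apply_eq_zero_iff ℂ _).mp hc)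
    set L := LinearMap.toContinuousLinearMap (f ∘ₗ P.mkQ) with hLdef
    have hLapp : ∀ z, L z = f (P.mkQ z) := fun z => rfl
    have hLP : ∀ z ∈ P, L z = 0 := by
      intro z hz
      rw [hLapp, Submodule.mkQ_apply, (Submodule.Quotient.mk_eq_zero P).mpr hz, map_zero]
    obtain ⟨a, ha, heq⟩ := hyp (fun z => L z) (L.analyticAt 0)
      (Eventually.of_forall fun z hz => hLP z hz)
    have Tl : Tendsto (fun t : ℂ => (t ^ l)⁻¹ * L (φ t)) (𝓝[≠] 0) (𝓝 (L v)) := by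
      have := (L.continuous.tendsto v).comp hlim
      refine this.congr fun t => ?_
      simp [Function.comp, map_smul, smul_eq_mul]
    have T0 : Tendsto (fun t : ℂ => (t ^ l)⁻¹ * L (φ t)) (𝓝[≠] 0) (𝓝 0) := by
      have hterm : ∀ i : Fin n,
          Tendsto (fun t : ℂ => a i t * ((t ^ l)⁻¹ * φ t i)) (𝓝[≠] 0) (𝓝 0) := by
        intro i
        have h1 : Tendsto (a i) (𝓝[≠] (0 : ℂ)) (𝓝 0) := by
          have := (ha i).1.continuousAt.tendsto
          rw [(ha i).2] at this
          exact this.mono_left nhdsWithin_le_nhds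
        have h2 : Tendsto (fun t : ℂ => (t ^ l)⁻¹ * φ t i) (𝓝[≠] 0) (𝓝 (v i)) := by
          have := ((continuous_apply i).tendsto v).comp hlim
          refine this.congr fun t => ?_
          simp [Function.comp]
        simpa using h1.mul h2
      have hsum : Tendsto (fun t : ℂ => ∑ i, a i t * ((t ^ l)⁻¹ * φ t i)) (𝓝[≠] 0) (𝓝 0) := by
        have := tendsto_finset_sum Finset.univ (fun i _ => hterm i)
        simpa using this
      refine hsum.congr' ?_
      filter_upwards [heq.filter_mono nhdsWithin_le_nhds] with t ht
      rw [show L (φ t) = ∑ i, a i t * φ t i from ht, Finset.mul_sum]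
      exact Finset.sum_congr rfl fun i _ => by ring
    exact hf (by simpa [hLapp] using tendsto_nhds_unique Tl T0)

end
end

section
/- Let P = Γ(f) be an analytic direct transversal to Y and let φ(t) = (x(t),y(t)) be an analytic curve-germ at 0 in k^{n+k}. Then |y(t) − f(x(t))| = o(|x(t)|^r) if and only if φ*I(P) ⊆ m_1 φ*(m_n^r). -/
/- Statement 3 (Lemma 2.8): a curve satisfies `|y(t) − f(x(t))| = o(|x(t)|^r)` iff
`φ*I(P) ⊆ m₁ φ*(m_n^r)`. -/

open Filter Topology Asymptotics

noncomputable section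

variable {𝕜 : Type} [RCLike 𝕜]

/-- `𝕜^n`. -/
abbrev Em (𝕜 : Type) [RCLike 𝕜] (n : ℕ) := Fin n → 𝕜

/-- `u` belongs to the ideal `m₁ · φ*(m_n^r)` of `O₁` along the curve `x(t)`:
`u(t)` is a finite combination of degree-`r` monomials in the components of `x(t)` with
analytic coefficients vanishing at `0`. -/
def memM1MnPow {n : ℕ} (r : ℕ) (x : 𝕜 → Em 𝕜 n) (u : 𝕜 → 𝕜) : Prop :=
  ∃ (m : ℕ) (a : Fin m → 𝕜 → 𝕜) (α : Fin m → (Fin n → ℕ)),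
    (∀ i, AnalyticAt 𝕜 (a i) 0 ∧ a i 0 = 0 ∧ (∑ l, α i l) = r) ∧
    ∀ᶠ t in 𝓝 (0 : 𝕜), u t = ∑ i, a i t * ∏ l, (x t l) ^ (α i l)

lemma eventually_norm_le_one : ∀ᶠ t in 𝓝 (0:𝕜), ‖t‖ ≤ 1 := by
  filter_upwards [Metric.ball_mem_nhds (0:𝕜) one_pos] with t ht
  simp only [Metric.mem_ball, dist_zero_right] at ht
  exact ht.le

lemma littleO_factor {g : 𝕜 → 𝕜} (hg : AnalyticAt 𝕜 g 0) (N : ℕ)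
    (h : g =o[𝓝 (0:𝕜)] fun t => ‖t‖ ^ N) :
    ∃ c : 𝕜 → 𝕜, AnalyticAt 𝕜 c 0 ∧ c 0 = 0 ∧ ∀ᶠ t in 𝓝 (0:𝕜), g t = t ^ N * c t := by
  cases h' : analyticOrderAt g 0 with
  | top =>
    refine ⟨0, analyticAt_const, rfl, ?_⟩
    filter_upwards [analyticOrderAt_eq_top.mp h'] with t ht
    simp [ht]
  | coe m =>
    obtain ⟨u, hu, hu0, heq⟩ := (hg.analyticOrderAt_eq_natCast (n := m)).mp h'
    simp only [sub_zero, smul_eq_mul] at heq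
    by_cases hm : N < m
    · refine ⟨fun t => t ^ (m - N) * u t, (analyticAt_id.pow _).mul hu,
        by simp [Nat.sub_ne_zero_of_lt hm], ?_⟩
      filter_upwards [heq] with t ht
      rw [ht, ← mul_assoc, ← pow_add, Nat.add_sub_cancel' hm.le]
    · exfalso
      push_neg at hm
      have hb : (0:ℝ) < ‖u 0‖ := norm_pos_iff.mpr hu0
      have hcont : ∀ᶠ t in 𝓝 (0:𝕜), ‖u 0‖ / 2 < ‖u t‖ :=
        hu.continuousAt.norm.eventually (eventually_gt_nhds (half_lt_self hb))
      have hbd := h.def (by positivity : (0:ℝ) < ‖u 0‖ / 4)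
      have hz : ∀ᶠ t in 𝓝 (0:𝕜), t = 0 := by
        filter_upwards [heq, hcont, hbd, eventually_norm_le_one] with t h1 h2 h3 h4
        rw [h1] at h3
        have hNm : ‖t‖ ^ N ≤ ‖t‖ ^ m := pow_le_pow_of_le_one (norm_nonneg _) h4 hm
        have hA : (0:ℝ) ≤ ‖t‖ ^ m := by positivity
        have h5 : ‖t ^ m * u t‖ = ‖t‖ ^ m * ‖u t‖ := by rw [norm_mul, norm_pow]
        rw [h5] at h3
        have h6 : ‖(‖t‖ ^ N : ℝ)‖ = ‖t‖ ^ N := by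
          rw [Real.norm_eq_abs, abs_of_nonneg (by positivity)]
        rw [h6] at h3
        have : ‖t‖ ^ m = 0 := by nlinarith
        rcases Nat.eq_zero_or_pos m with hm0 | hm0
        · simp [hm0] at this
        · have := pow_eq_zero_iff hm0.ne' |>.mp this
          simpa using this
      obtain ⟨t, htne, ht0⟩ :=
        (Filter.Eventually.and (eventually_mem_nhdsWithin)
          (hz.filter_mono (nhdsWithin_le_nhds (s := {(0:𝕜)}ᶜ)))).exists
      exact htne ht0

lemma comp_an {n : ℕ} {x : 𝕜 → Em 𝕜 n} (hx : AnalyticAt 𝕜 x 0) (l : Fin n) :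
    AnalyticAt 𝕜 (fun t => x t l) 0 :=
  ((ContinuousLinearMap.proj l : Em 𝕜 n →L[𝕜] 𝕜).analyticAt (x 0)).comp hx

/-- **Lemma 2.8.**  Let `P = Γ(f)` be an analytic direct transversal to `Y = {0} × 𝕜^k` and
`φ(t) = (x(t), y(t))` an analytic curve germ at `0` in `𝕜^{n+k}`.  Then
`|y(t) − f(x(t))| = o(|x(t)|^r)` iff `φ*I(P) ⊆ m₁ φ*(m_n^r)`, i.e. iff each pullback
`yⱼ(t) − fⱼ(x(t))` of the generators of `I(P) = (y₁−f₁, …, y_k−f_k)` lies in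
`m₁ φ*(m_n^r)`. -/
theorem statement3 {n k : ℕ} (r : ℕ)
    (f : Em 𝕜 n → Em 𝕜 k) (hf : AnalyticAt 𝕜 f 0) (hf0 : f 0 = 0)
    (x : 𝕜 → Em 𝕜 n) (y : 𝕜 → Em 𝕜 k)
    (hx : AnalyticAt 𝕜 x 0) (hy : AnalyticAt 𝕜 y 0) (hx0 : x 0 = 0) (hy0 : y 0 = 0) :
    ((fun t => y t - f (x t)) =o[𝓝 (0 : 𝕜)] (fun t => ‖x t‖ ^ r)) ↔
      ∀ j : Fin k, memM1MnPow r x (fun t => y t j - f (x t) j) := by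
  have hfx : AnalyticAt 𝕜 (fun t => f (x t)) 0 := by
    have : AnalyticAt 𝕜 f (x 0) := by rw [hx0]; exact hf
    exact this.comp hx
  have hg : AnalyticAt 𝕜 (fun t => y t - f (x t)) 0 := hy.sub hfx
  have hgj : ∀ j, AnalyticAt 𝕜 (fun t => y t j - f (x t) j) 0 := fun j => comp_an hg j
  have hgj0 : ∀ j, y 0 j - f (x 0) j = 0 := by
    intro j; rw [hx0, hy0, hf0]; simp
  constructor
  · intro h j
    rcases Nat.eq_zero_or_pos r with hr | hr
    · -- trivial representation with the function itself
      subst hr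
      refine ⟨1, fun _ => fun t => y t j - f (x t) j, fun _ => 0, ?_, ?_⟩
      · exact fun i => ⟨hgj j, hgj0 j, by simp⟩
      · filter_upwards with t; simp
    · by_cases hxz : ∀ᶠ t in 𝓝 (0:𝕜), x t = 0
      · refine ⟨0, Fin.elim0, Fin.elim0, fun i => i.elim0, ?_⟩
        filter_upwards [hxz, h.def one_pos] with t h1 h2
        rw [h1] at h2
        simp only [norm_zero, zero_pow hr.ne', norm_zero, mul_zero] at h2
        have : y t - f (x t) = 0 := by rw [h1]; exact norm_le_zero_iff.mp h2
        have := congrFun this j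
        simpa using this
      · -- main case : some component of x is not identically zero
        have hex : ∃ l, ¬ ∀ᶠ t in 𝓝 (0:𝕜), x t l = 0 := by
          by_contra hall
          push_neg at hall
          exact hxz (by
            have : ∀ᶠ t in 𝓝 (0:𝕜), ∀ l, x t l = 0 := eventually_all.mpr hall
            filter_upwards [this] with t ht
            exact funext ht)
        obtain ⟨l₁, hl₁⟩ := hex
        set o : Fin n → ℕ∞ := fun l => analyticOrderAt (fun t => x t l) 0 with ho
        have hl₁' : o l₁ ≠ ⊤ := fun h' => hl₁ (analyticOrderAt_eq_top.mp h')
        have hune : (Finset.univ : Finset (Fin n)).Nonempty := ⟨l₁, Finset.mem_univ _⟩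
        obtain ⟨l₀, -, hl₀⟩ := Finset.exists_mem_eq_inf' hune o
        have hinf_le : ∀ l, o l₀ ≤ o l := fun l => hl₀ ▸ Finset.inf'_le _ (Finset.mem_univ l)
        have hl₀top : o l₀ ≠ ⊤ := fun h' => hl₁' (top_le_iff.mp (h' ▸ hinf_le l₁))
        obtain ⟨s, hs⟩ : ∃ s : ℕ, o l₀ = (s : ℕ∞) := by
          cases h' : o l₀ with
          | top => exact absurd h' hl₀top
          | coe s => exact ⟨s, rfl⟩
        obtain ⟨u, hu, hu0, hequ⟩ := ((comp_an hx l₀).analyticOrderAt_eq_natCast (n := s)).mp hs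
        simp only [sub_zero, smul_eq_mul] at hequ
        -- each component is O(t^s)
        have hO : ∀ l, (fun t => x t l) =O[𝓝 (0:𝕜)] fun t => t ^ s := by
          intro l
          cases hml : o l with
          | top =>
            have hzz := analyticOrderAt_eq_top.mp hml
            exact (EventuallyEq.trans_isBigO hzz (isBigO_zero _ _))
          | coe m =>
            have hsm : s ≤ m := by
              have := hinf_le l
              rw [hs, hml, Nat.cast_le] at this
              exact this
            obtain ⟨v, hv, hv0, heqv⟩ := ((comp_an hx l).analyticOrderAt_eq_natCast (n := m)).mp hml
            simp only [sub_zero, smul_eq_mul] at heqv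
            rw [isBigO_iff]
            refine ⟨‖v 0‖ + 1, ?_⟩
            have hcv : ∀ᶠ t in 𝓝 (0:𝕜), ‖v t‖ < ‖v 0‖ + 1 :=
              hv.continuousAt.norm.eventually (eventually_lt_nhds (lt_add_one _))
            filter_upwards [heqv, hcv, eventually_norm_le_one] with t h1 h2 h3
            rw [h1, norm_mul, norm_pow, norm_pow]
            have hms : ‖t‖ ^ m ≤ ‖t‖ ^ s := pow_le_pow_of_le_one (norm_nonneg _) h3 hsm
            calc ‖t‖ ^ m * ‖v t‖ ≤ ‖t‖ ^ s * (‖v 0‖ + 1) := by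
                  apply mul_le_mul hms h2.le (norm_nonneg _) (by positivity)
              _ = (‖v 0‖ + 1) * ‖t‖ ^ s := by ring
        have hxO : x =O[𝓝 (0:𝕜)] fun t => t ^ s := isBigO_pi.mpr hO
        have hnorm : (fun t => ‖x t‖ ^ r) =O[𝓝 (0:𝕜)] fun t => ‖t‖ ^ (s * r) := by
          have h1 := (hxO.norm_norm.pow r)
          have : (fun t : 𝕜 => ‖t ^ s‖ ^ r) = fun t => ‖t‖ ^ (s * r) := by
            funext t; rw [norm_pow, ← pow_mul]
          rwa [this] at h1
        have hj : (fun t => y t j - f (x t) j) =o[𝓝 (0:𝕜)] fun t => ‖t‖ ^ (s * r) := by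
          have := (isLittleO_pi.mp h j).trans_isBigO hnorm
          simpa using this
        obtain ⟨c, hc, hc0, hgc⟩ := littleO_factor (hgj j) (s * r) hj
        have hune' : ∀ᶠ t in 𝓝 (0:𝕜), u t ≠ 0 := hu.continuousAt.eventually_ne hu0
        refine ⟨1, fun _ => fun t => c t * ((u t)⁻¹) ^ r,
          fun _ => fun l => if l = l₀ then r else 0, ?_, ?_⟩
        · intro i
          refine ⟨hc.mul ((hu.inv hu0).pow r), by simp [hc0], ?_⟩
          simp [Finset.sum_ite_eq']
        · filter_upwards [hgc, hequ, hune'] with t h1 h2 h3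
          have hprod : (∏ l, x t l ^ (if l = l₀ then r else 0)) = x t l₀ ^ r := by
            rw [Finset.prod_eq_single l₀]
            · simp
            · intro b _ hb; simp [hb]
            · simp
          rw [h1, Fin.sum_univ_one, hprod, h2, mul_pow, ← pow_mul]
          field_simp
          rw [mul_assoc _ ((1 / u t) ^ r), ← mul_pow, one_div_mul_cancel h3, one_pow, mul_one]
  · intro h
    apply isLittleO_pi.mpr
    intro j
    obtain ⟨m, a, α, hprops, heq⟩ := h j
    have heq' : (fun t => (y t - f (x t)) j) =ᶠ[𝓝 (0:𝕜)]
        fun t => ∑ i, a i t * ∏ l, (x t l) ^ (α i l) := by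
      filter_upwards [heq] with t ht
      simpa using ht
    refine heq'.trans_isLittleO ?_
    apply Asymptotics.IsLittleO.fun_sum
    intro i _
    have h1 : (a i) =o[𝓝 (0:𝕜)] (fun _ => (1:ℝ)) := by
      rw [isLittleO_one_iff]
      have := (hprops i).1.continuousAt
      rwa [ContinuousAt, (hprops i).2.1] at this
    have h2 : (fun t => ∏ l, x t l ^ α i l) =O[𝓝 (0:𝕜)] fun t => ‖x t‖ ^ r := by
      rw [isBigO_iff]
      refine ⟨1, ?_⟩
      filter_upwards with t
      rw [one_mul]
      have e1 : ‖∏ l, x t l ^ α i l‖ = ∏ l, ‖x t l‖ ^ α i l := by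
        rw [norm_prod]; simp [norm_pow]
      have e2 : (∏ l, ‖x t l‖ ^ α i l) ≤ ∏ l, ‖x t‖ ^ α i l :=
        Finset.prod_le_prod (fun l _ => by positivity)
          (fun l _ => pow_le_pow_left₀ (norm_nonneg _) (norm_le_pi_norm (x t) l) _)
      have e3 : (∏ l, ‖x t‖ ^ α i l) = ‖x t‖ ^ r := by
        rw [Finset.prod_pow_eq_pow_sum, (hprops i).2.2]
      have e4 : ‖(‖x t‖ ^ r : ℝ)‖ = ‖x t‖ ^ r := by
        rw [Real.norm_eq_abs, abs_of_nonneg (by positivity)]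
      rw [e1, e4]
      exact e2.trans_eq e3
    have := h1.mul_isBigO h2
    simpa using this


end
end

section
/- With the set-up below, let φ(t) = (x(t),y(t)) be an analytic curve with φ(0) = 0, φ(t) ∈ W for t ≠ 0, satisfying |y(t)−f(x(t))| = o(|x(t)|^r). Then the inclusion φ*(m_n^{r−1}JM_y(F)) ⊆ φ*(JM(F)_P) (if r ≥ 1), respectively φ*(JM_y(F)) ⊆ φ*(m_n JM(F)_P) (if r = 0), holds if and only if φ*(m_n^r JM_y(F)) ⊆ φ*(m_n JM(F)_P + I(P)JM_y(F)). -/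
/- Statement 4 (Lemma 2.9): equivalence of two pullback module inclusions along a curve. -/

open Filter Topology Asymptotics

noncomputable section
set_option synthInstance.maxHeartbeats 1000000
set_option maxHeartbeats 2000000

variable {𝕜 : Type} [RCLike 𝕜]

/-- The monomial `x^α`. -/
def mono {n : ℕ} (α : Fin n → ℕ) (x : Em 𝕜 n) : 𝕜 := ∏ l, (x l) ^ (α l)

/-- `∂F/∂yⱼ`. -/
def dyF {n k p : ℕ} (F : Em 𝕜 n × Em 𝕜 k → Em 𝕜 p) (j : Fin k)
    (z : Em 𝕜 n × Em 𝕜 k) : Em 𝕜 p :=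
  fderiv 𝕜 F z (0, Pi.single j 1)

/-- The `i`-th generator of `JM(F)_P`: `∂F/∂xᵢ + Σⱼ (∂fⱼ/∂xᵢ) ∂F/∂yⱼ`. -/
def JMPgen {n k p : ℕ} (F : Em 𝕜 n × Em 𝕜 k → Em 𝕜 p) (f : Em 𝕜 n → Em 𝕜 k) (i : Fin n)
    (z : Em 𝕜 n × Em 𝕜 k) : Em 𝕜 p :=
  fderiv 𝕜 F z (Pi.single i 1, fderiv 𝕜 f z.1 (Pi.single i 1))

/-- Generators of `JM_y(F)`. -/
def JMyS {n k p : ℕ} (F : Em 𝕜 n × Em 𝕜 k → Em 𝕜 p) : Set (Em 𝕜 n × Em 𝕜 k → Em 𝕜 p) :=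
  {h | ∃ j : Fin k, h = dyF F j}

/-- Generators of `JM(F)_P`. -/
def JMPS {n k p : ℕ} (F : Em 𝕜 n × Em 𝕜 k → Em 𝕜 p) (f : Em 𝕜 n → Em 𝕜 k) :
    Set (Em 𝕜 n × Em 𝕜 k → Em 𝕜 p) :=
  {h | ∃ i : Fin n, h = JMPgen F f i}

/-- Generators of `m_n^r · M` for a generating set `M`. -/
def mnPow {n k p : ℕ} (r : ℕ) (Gens : Set (Em 𝕜 n × Em 𝕜 k → Em 𝕜 p)) :
    Set (Em 𝕜 n × Em 𝕜 k → Em 𝕜 p) :=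
  {h | ∃ α : Fin n → ℕ, (∑ l, α l) = r ∧ ∃ g ∈ Gens, h = fun z => mono α z.1 • g z}

/-- Generators of `I(P)·JM_y(F)` where `P = Γ(f)`. -/
def IPJMy {n k p : ℕ} (F : Em 𝕜 n × Em 𝕜 k → Em 𝕜 p) (f : Em 𝕜 n → Em 𝕜 k) :
    Set (Em 𝕜 n × Em 𝕜 k → Em 𝕜 p) :=
  {h | ∃ (j j' : Fin k), h = fun z => (z.2 j - f z.1 j) • dyF F j' z}

/-- `u` lies in the `O₁`-module generated by the pullbacks along `φ` of the members of
`Gens`. -/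
def MemPB {Z : Type} {p : ℕ} (Gens : Set (Z → Em 𝕜 p)) (φ : 𝕜 → Z) (u : 𝕜 → Em 𝕜 p) :
    Prop :=
  ∃ (m : ℕ) (a : Fin m → 𝕜 → 𝕜) (g : Fin m → (Z → Em 𝕜 p)),
    (∀ i, AnalyticAt 𝕜 (a i) 0) ∧ (∀ i, g i ∈ Gens) ∧
    ∀ᶠ t in 𝓝 (0 : 𝕜), u t = ∑ i, a i t • g i (φ t)


section Helpers

variable {n k p : ℕ}

/-! ### Generalities on analytic functions -/

lemma analyticAt_clm_apply {E F G : Type*} [NormedAddCommGroup E] [NormedSpace 𝕜 E]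
    [NormedAddCommGroup F] [NormedSpace 𝕜 F] [NormedAddCommGroup G] [NormedSpace 𝕜 G]
    {f : E → F →L[𝕜] G} {g : E → F} {x : E}
    (hf : AnalyticAt 𝕜 f x) (hg : AnalyticAt 𝕜 g x) :
    AnalyticAt 𝕜 (fun y => f y (g y)) x :=
  ((ContinuousLinearMap.apply 𝕜 G).flip.analyticAt_bilinear (f x, g x)).comp₂ hf hg

/-- An analytic function on `𝕜` vanishing at `0` is divisible by `t`. -/
lemma exists_div_t {g : 𝕜 → 𝕜} (hg : AnalyticAt 𝕜 g 0) (h0 : g 0 = 0) :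
    ∃ w : 𝕜 → 𝕜, AnalyticAt 𝕜 w 0 ∧ ∀ᶠ t in 𝓝 (0 : 𝕜), g t = t * w t := by
  rcases eq_or_ne (analyticOrderAt g 0) ⊤ with ho | ho
  · refine ⟨0, analyticAt_const, ?_⟩
    filter_upwards [analyticOrderAt_eq_top.1 ho] with t ht
    simp [ht]
  · obtain ⟨m, hm⟩ : ∃ m : ℕ, analyticOrderAt g 0 = m := by
      lift analyticOrderAt g 0 to ℕ using ho with m hm
      exact ⟨m, rfl⟩
    obtain ⟨u, hu, hu0, hgu⟩ := (hg.analyticOrderAt_eq_natCast (n := m)).1 hm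
    have hm0 : m ≠ 0 := by
      rintro rfl
      apply hu0
      have := hgu.self_of_nhds
      simpa [h0] using this.symm
    obtain ⟨m', rfl⟩ := Nat.exists_eq_succ_of_ne_zero hm0
    refine ⟨fun t => t ^ m' * u t, (AnalyticAt.mul (analyticAt_id.pow m') hu), ?_⟩
    filter_upwards [hgu] with t ht
    rw [ht]
    simp [smul_eq_mul, pow_succ]
    ring

/-- If `t^m * w t` is `o(‖t‖^m)` with `w` analytic, then `w 0 = 0`. -/
lemma vanish_of_littleO {w : 𝕜 → 𝕜} (hw : AnalyticAt 𝕜 w 0) (m : ℕ)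
    (h : (fun t => t ^ m * w t) =o[𝓝 (0 : 𝕜)] (fun t => ‖t‖ ^ m)) : w 0 = 0 := by
  have h1 : Filter.Tendsto w (𝓝[≠] (0 : 𝕜)) (𝓝 0) := by
    rw [NormedAddCommGroup.tendsto_nhds_zero]
    intro ε hε
    have h2 := h.def (half_pos hε)
    rw [eventually_nhdsWithin_iff]
    filter_upwards [h2] with t ht ht0
    have htm : ‖t‖ ^ m ≠ 0 := pow_ne_zero _ (norm_ne_zero_iff.2 ht0)
    have : ‖t ^ m * w t‖ = ‖t‖ ^ m * ‖w t‖ := by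
      rw [norm_mul, norm_pow]
    rw [this, Real.norm_of_nonneg (pow_nonneg (norm_nonneg t) m)] at ht
    have : ‖w t‖ ≤ ε / 2 := by
      rw [mul_comm] at ht
      exact le_of_mul_le_mul_right ht (lt_of_le_of_ne (pow_nonneg (norm_nonneg t) m) (Ne.symm htm))
    linarith
  have h2 : Filter.Tendsto w (𝓝[≠] (0 : 𝕜)) (𝓝 (w 0)) :=
    (hw.continuousAt.tendsto).mono_left nhdsWithin_le_nhds
  exact tendsto_nhds_unique h2 h1

/-- Division lemma: an analytic `g` with `g = o(‖t‖^m)` factors as `t^m * w` with `w 0 = 0`. -/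
lemma exists_factor_littleO {g : 𝕜 → 𝕜} (hg : AnalyticAt 𝕜 g 0) (m : ℕ)
    (h : g =o[𝓝 (0 : 𝕜)] (fun t => ‖t‖ ^ m)) :
    ∃ w : 𝕜 → 𝕜, AnalyticAt 𝕜 w 0 ∧ w 0 = 0 ∧ ∀ᶠ t in 𝓝 (0 : 𝕜), g t = t ^ m * w t := by
  induction m with
  | zero =>
    refine ⟨g, hg, ?_, by simp⟩
    exact vanish_of_littleO hg 0 (by simpa using h)
  | succ m ih =>
    have hO : (fun t : 𝕜 => ‖t‖ ^ (m + 1)) =O[𝓝 (0 : 𝕜)] (fun t => ‖t‖ ^ m) := by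
      apply Asymptotics.IsBigO.of_bound 1
      have : ∀ᶠ t : 𝕜 in 𝓝 0, ‖t‖ ≤ 1 := by
        have : Metric.closedBall (0 : 𝕜) 1 ∈ 𝓝 (0 : 𝕜) := Metric.closedBall_mem_nhds _ one_pos
        filter_upwards [this] with t ht
        simpa using ht
      filter_upwards [this] with t ht
      rw [Real.norm_of_nonneg (pow_nonneg (norm_nonneg t) _),
        Real.norm_of_nonneg (pow_nonneg (norm_nonneg t) _), one_mul]
      exact pow_le_pow_of_le_one (norm_nonneg t) ht (Nat.le_succ m)
    obtain ⟨w₁, hw₁, hw₁0, hgw₁⟩ := ih (h.trans_isBigO hO)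
    obtain ⟨w, hw, hww⟩ := exists_div_t hw₁ hw₁0
    have hg' : ∀ᶠ t in 𝓝 (0 : 𝕜), g t = t ^ (m + 1) * w t := by
      filter_upwards [hgw₁, hww] with t h1 h2
      rw [h1, h2]; ring
    refine ⟨w, hw, ?_, hg'⟩
    exact vanish_of_littleO hw (m + 1) (h.congr' hg' Filter.EventuallyEq.rfl)

/-! ### Monomial lemmas -/

lemma mono_single (l₀ : Fin n) (r : ℕ) (x : Em 𝕜 n) :
    mono (Pi.single l₀ r) x = x l₀ ^ r := by
  unfold mono
  rw [Finset.prod_eq_single l₀]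
  · simp
  · intro l _ hl
    simp [Pi.single_apply, hl]
  · simp

lemma mono_add (α β : Fin n → ℕ) (x : Em 𝕜 n) :
    mono (α + β) x = mono α x * mono β x := by
  unfold mono
  rw [← Finset.prod_mul_distrib]
  exact Finset.prod_congr rfl fun l _ => by simp [pow_add]

lemma sum_single (l₀ : Fin n) (r : ℕ) : ∑ l, (Pi.single l₀ r : Fin n → ℕ) l = r := by
  rw [Finset.sum_eq_single l₀] <;> simp +contextual [Pi.single_apply]

/-- A multi-index of weight `m+1` splits off a variable. -/
lemma exists_decomp {α : Fin n → ℕ} {m : ℕ} (h : ∑ l, α l = m + 1) :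
    ∃ (l : Fin n) (β : Fin n → ℕ), (∑ l', β l' = m) ∧ α = β + Pi.single l 1 := by
  have hne : ∃ l, α l ≠ 0 := by
    by_contra hc
    push_neg at hc
    simp [hc] at h
  obtain ⟨l, hl⟩ := hne
  refine ⟨l, Function.update α l (α l - 1), ?_, ?_⟩
  · have h2 := Finset.sum_update_of_mem (Finset.mem_univ l) α (α l - 1)
    have h3 := Finset.add_sum_erase Finset.univ α (Finset.mem_univ l)
    rw [Finset.erase_eq] at h3
    rw [h2]
    omega
  · funext l'
    rcases eq_or_ne l' l with rfl | hne'
    · simp [Function.update_self]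
      omega
    · simp [Function.update_of_ne hne', Pi.single_apply, hne']

lemma sum_eq_one_single {α : Fin n → ℕ} (h : ∑ l, α l = 1) :
    ∃ l, α = Pi.single l 1 := by
  obtain ⟨l, β, hβ, hαβ⟩ := exists_decomp (m := 0) h
  have : β = 0 := by
    funext l'
    have := Finset.sum_eq_zero_iff.1 hβ l' (Finset.mem_univ l')
    simpa using this
  exact ⟨l, by simpa [this] using hαβ⟩

/-! ### MemPB API -/

variable {Z : Type} {G G' : Set (Z → Em 𝕜 p)} {φ : 𝕜 → Z} {u v : 𝕜 → Em 𝕜 p}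

lemma memPB_congr (h : ∀ᶠ t in 𝓝 (0 : 𝕜), u t = v t) (hu : MemPB G φ u) : MemPB G φ v := by
  obtain ⟨m, a, g, ha, hg, he⟩ := hu
  refine ⟨m, a, g, ha, hg, ?_⟩
  filter_upwards [h, he] with t h1 h2
  rw [← h1, h2]

lemma memPB_mono (hGG : G ⊆ G') (hu : MemPB G φ u) : MemPB G' φ u := by
  obtain ⟨m, a, g, ha, hg, he⟩ := hu
  exact ⟨m, a, g, ha, fun i => hGG (hg i), he⟩

lemma memPB_of_mem {g : Z → Em 𝕜 p} (hg : g ∈ G) : MemPB G φ (fun t => g (φ t)) := by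
  refine ⟨1, fun _ _ => 1, fun _ => g, fun _ => analyticAt_const, fun _ => hg, ?_⟩
  filter_upwards with t
  simp

lemma memPB_smul {b : 𝕜 → 𝕜} (hb : AnalyticAt 𝕜 b 0) (hu : MemPB G φ u) :
    MemPB G φ (fun t => b t • u t) := by
  obtain ⟨m, a, g, ha, hg, he⟩ := hu
  refine ⟨m, fun i t => b t * a i t, g, fun i => hb.mul (ha i), hg, ?_⟩
  filter_upwards [he] with t ht
  rw [ht, Finset.smul_sum]
  exact Finset.sum_congr rfl fun i _ => smul_smul _ _ _

lemma memPB_zero : MemPB G φ (fun _ => (0 : Em 𝕜 p)) := by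
  refine ⟨0, fun i => i.elim0, fun i => i.elim0, fun i => i.elim0, fun i => i.elim0, ?_⟩
  filter_upwards with t
  simp

lemma memPB_add (hu : MemPB G φ u) (hv : MemPB G φ v) : MemPB G φ (fun t => u t + v t) := by
  obtain ⟨m₁, a₁, g₁, ha₁, hg₁, he₁⟩ := hu
  obtain ⟨m₂, a₂, g₂, ha₂, hg₂, he₂⟩ := hv
  refine ⟨m₁ + m₂, Fin.append a₁ a₂, Fin.append g₁ g₂, ?_, ?_, ?_⟩
  · intro i
    refine Fin.addCases (fun i => ?_) (fun i => ?_) i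
    · rw [Fin.append_left]; exact ha₁ i
    · rw [Fin.append_right]; exact ha₂ i
  · intro i
    refine Fin.addCases (fun i => ?_) (fun i => ?_) i
    · rw [Fin.append_left]; exact hg₁ i
    · rw [Fin.append_right]; exact hg₂ i
  · filter_upwards [he₁, he₂] with t h1 h2
    rw [h1, h2, Fin.sum_univ_add]
    congr 1 <;> exact Finset.sum_congr rfl fun i _ => by
      simp [Fin.append_left, Fin.append_right]

lemma memPB_sum {ι : Type} (s : Finset ι) (w : ι → 𝕜 → Em 𝕜 p)
    (h : ∀ q ∈ s, MemPB G φ (w q)) : MemPB G φ (fun t => ∑ q ∈ s, w q t) := by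
  classical
  induction s using Finset.induction with
  | empty => exact memPB_congr (by filter_upwards with t; simp) memPB_zero
  | @insert a s ha ih =>
    have := memPB_add (h a (Finset.mem_insert_self a s))
      (ih fun q hq => h q (Finset.mem_insert_of_mem hq))
    refine memPB_congr ?_ this
    filter_upwards with t
    rw [Finset.sum_insert ha]

/-! ### Analytic families of matrices -/

lemma analyticAt_det {N : ℕ} (A : 𝕜 → Matrix (Fin N) (Fin N) 𝕜)
    (h : ∀ i j, AnalyticAt 𝕜 (fun t => A t i j) 0) :
    AnalyticAt 𝕜 (fun t => (A t).det) 0 := by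
  have h1 : ∀ σ ∈ (Finset.univ : Finset (Equiv.Perm (Fin N))), AnalyticAt 𝕜
      (fun t => (((Equiv.Perm.sign σ : ℤ) : 𝕜)) * ∏ i, A t (σ i) i) 0 := by
    intro σ _
    exact analyticAt_const.mul
      (Finset.analyticAt_fun_prod _ (fun i _ => h (σ i) i))
  refine (Finset.analyticAt_fun_sum _ h1).congr ?_
  filter_upwards with t
  rw [Matrix.det_apply]
  exact Finset.sum_congr rfl fun σ _ => by rw [Units.smul_def, zsmul_eq_mul]

/-- Solving a linear system `v = nv + C v` with analytic coefficients `C` vanishing at `0`: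
a concrete Nakayama-type lemma. -/
lemma solve_linear {N : ℕ} (v nv : Fin N → 𝕜 → Em 𝕜 p) (C : Fin N → Fin N → 𝕜 → 𝕜)
    (hC : ∀ q q', AnalyticAt 𝕜 (C q q') 0) (hC0 : ∀ q q', C q q' 0 = 0)
    (heq : ∀ q, ∀ᶠ t in 𝓝 (0 : 𝕜), v q t = nv q t + ∑ q', C q q' t • v q' t) :
    ∃ B : Fin N → Fin N → 𝕜 → 𝕜, (∀ q q', AnalyticAt 𝕜 (B q q') 0) ∧
      ∀ q, ∀ᶠ t in 𝓝 (0 : 𝕜), v q t = ∑ q', B q q' t • nv q' t := by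
  classical
  set M : 𝕜 → Matrix (Fin N) (Fin N) 𝕜 :=
    fun t => 1 - Matrix.of (fun q q' => C q q' t) with hM
  have hMa : ∀ i j, AnalyticAt 𝕜 (fun t => M t i j) 0 := by
    intro i j
    have : (fun t => M t i j) =
        fun t => ((1 : Matrix (Fin N) (Fin N) 𝕜) i j - C i j t) := rfl
    rw [this]
    exact analyticAt_const.sub (hC i j)
  have hdet : AnalyticAt 𝕜 (fun t => (M t).det) 0 := analyticAt_det M hMa
  have hM0 : M 0 = 1 := by
    ext i j
    simp [hM, hC0]
  have hdet0 : (M 0).det = 1 := by rw [hM0, Matrix.det_one]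
  have hdetne : (M 0).det ≠ 0 := by rw [hdet0]; exact one_ne_zero
  have hne : ∀ᶠ t in 𝓝 (0 : 𝕜), (M t).det ≠ 0 :=
    hdet.continuousAt.eventually_ne hdetne
  have hadj : ∀ q q', AnalyticAt 𝕜 (fun t => (M t).adjugate q q') 0 := by
    intro q q'
    have ha : ∀ i j, AnalyticAt 𝕜
        (fun t => ((M t).updateRow q' (Pi.single q 1)) i j) 0 := by
      intro i j
      rcases eq_or_ne i q' with rfl | hiq
      · simp only [Matrix.updateRow_self]
        exact analyticAt_const
      · simp only [Matrix.updateRow_ne hiq]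
        exact hMa i j
    have := analyticAt_det _ ha
    refine this.congr ?_
    filter_upwards with t
    rw [Matrix.adjugate_apply]
  refine ⟨fun q q' t => ((M t).det)⁻¹ * (M t).adjugate q q',
    fun q q' => (hdet.inv hdetne).mul (hadj q q'), ?_⟩
  intro q
  filter_upwards [hne, Filter.eventually_all.2 heq] with t hd hv
  have key : ∀ l, ∑ q', M t l q' • v q' t = nv l t := by
    intro l
    have h1 : ∀ q', M t l q' • v q' t =
        (if l = q' then (1 : 𝕜) else 0) • v q' t - C l q' t • v q' t := by
      intro q'
      rw [← sub_smul]
      congr 1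
    rw [Finset.sum_congr rfl (fun q' _ => h1 q'), Finset.sum_sub_distrib]
    have h2 : ∑ q', (if l = q' then (1 : 𝕜) else 0) • v q' t = v l t := by
      simp [ite_smul]
    rw [h2, hv l]
    abel
  have calc1 : ∑ q', (((M t).det)⁻¹ * (M t).adjugate q q') • nv q' t = v q t := by
    have e1 : ∀ q', nv q' t = ∑ l, M t q' l • v l t := fun q' => (key q').symm
    calc ∑ q', (((M t).det)⁻¹ * (M t).adjugate q q') • nv q' t
        = ∑ q', ∑ l, ((((M t).det)⁻¹ * (M t).adjugate q q') * M t q' l) • v l t := by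
          refine Finset.sum_congr rfl fun q' _ => ?_
          rw [e1 q', Finset.smul_sum]
          exact Finset.sum_congr rfl fun l _ => by rw [smul_smul]
      _ = ∑ l, (∑ q', (((M t).det)⁻¹ * (M t).adjugate q q') * M t q' l) • v l t := by
          rw [Finset.sum_comm]
          exact Finset.sum_congr rfl fun l _ => (Finset.sum_smul).symm
      _ = ∑ l, (((M t).det)⁻¹ * ((M t).adjugate * (M t)) q l) • v l t := by
          refine Finset.sum_congr rfl fun l _ => ?_
          congr 1
          rw [Matrix.mul_apply, Finset.mul_sum]
          exact Finset.sum_congr rfl fun q' _ => by ring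
      _ = ∑ l, ((if q = l then (1 : 𝕜) else 0)) • v l t := by
          refine Finset.sum_congr rfl fun l _ => ?_
          rw [Matrix.adjugate_mul]
          congr 1
          rw [Matrix.smul_apply, Matrix.one_apply, smul_eq_mul]
          rcases eq_or_ne q l with rfl | hql
          · simp [inv_mul_cancel₀ hd]
          · simp [hql]
      _ = v q t := by
          simp [ite_smul]
  exact calc1.symm

lemma mono_zero (x : Em 𝕜 n) : mono (0 : Fin n → ℕ) x = 1 := by
  unfold mono; simp

/-- The core Nakayama-type step: if every generator of `φ*(m^r JM_y)` lies in
`φ*(m JM_P + I(P) JM_y)`, and the pullback of `I(P)` is divisible by `t^D` with quotient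
vanishing at `0`, while `mono α₀ ∘ φ = t^D ⬝ unit`, then every generator of `φ*(m^r JM_y)`
lies in `φ*(m JM_P)`. -/
lemma reverse_core {n k p : ℕ} (r : ℕ)
    (F : Em 𝕜 n × Em 𝕜 k → Em 𝕜 p) (f : Em 𝕜 n → Em 𝕜 k) (φ : 𝕜 → Em 𝕜 n × Em 𝕜 k)
    (α₀ : Fin n → ℕ) (hα₀ : ∑ l, α₀ l = r)
    (D : ℕ) (Uu : 𝕜 → 𝕜) (hUu : AnalyticAt 𝕜 Uu 0) (hUu0 : Uu 0 ≠ 0)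
    (hfact : ∀ᶠ t in 𝓝 (0 : 𝕜), mono α₀ ((φ t).1) = t ^ D * Uu t)
    (w : Fin k → 𝕜 → 𝕜) (hw : ∀ j, AnalyticAt 𝕜 (w j) 0) (hw0 : ∀ j, w j 0 = 0)
    (hwfact : ∀ j, ∀ᶠ t in 𝓝 (0 : 𝕜), (φ t).2 j - f ((φ t).1) j = t ^ D * w j t)
    (H : ∀ h ∈ mnPow r (JMyS F), MemPB (mnPow 1 (JMPS F f) ∪ IPJMy F f) φ (fun t => h (φ t))) :
    ∀ h ∈ mnPow r (JMyS F), MemPB (mnPow 1 (JMPS F f)) φ (fun t => h (φ t)) := by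
  classical
  intro h hh
  obtain ⟨α, hα, g0, ⟨j0, rfl⟩, rfl⟩ := hh
  -- decomposition of any element of `φ*(m^r JM_y)` as `n + ∑ c • v` with `c 0 = 0`
  have decomp : ∀ h', h' ∈ mnPow r (JMyS F) → ∃ (nn : 𝕜 → Em 𝕜 p) (c : Fin k → 𝕜 → 𝕜),
      MemPB (mnPow 1 (JMPS F f)) φ nn ∧ (∀ j'', AnalyticAt 𝕜 (c j'') 0) ∧
      (∀ j'', c j'' 0 = 0) ∧
      ∀ᶠ t in 𝓝 (0 : 𝕜), h' (φ t) = nn t + ∑ j'', c j'' t •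
        (mono α₀ ((φ t).1) • dyF F j'' (φ t)) := by
    intro h' hh'
    obtain ⟨m, a, g, ha, hg, he⟩ := H h' hh'
    have hchoice : ∀ i, ∃ j₁ j₂ : Fin k, g i ∈ mnPow 1 (JMPS F f) ∨
        g i = fun z => (z.2 j₁ - f z.1 j₁) • dyF F j₂ z := by
      intro i
      rcases hg i with hmem | ⟨j₁, j₂, hE⟩
      · exact ⟨j0, j0, Or.inl hmem⟩
      · exact ⟨j₁, j₂, Or.inr hE⟩
    choose J₁ J₂ hJ using hchoice
    set P : Fin m → Prop := fun i => g i ∈ mnPow 1 (JMPS F f) with hP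
    refine ⟨fun t => ∑ i ∈ Finset.univ.filter P, a i t • g i (φ t),
      fun j'' t => ∑ i ∈ Finset.univ.filter (fun i => ¬ P i ∧ J₂ i = j''),
        a i t * w (J₁ i) t * (Uu t)⁻¹, ?_, ?_, ?_, ?_⟩
    · exact memPB_sum _ _ fun i hi =>
        memPB_smul (ha i) (memPB_of_mem (Finset.mem_filter.1 hi).2)
    · intro j''
      exact Finset.analyticAt_fun_sum _ fun i _ =>
        ((ha i).mul (hw (J₁ i))).mul (hUu.inv hUu0)
    · intro j''
      simp [hw0]
    · have hU : ∀ᶠ t in 𝓝 (0 : 𝕜), Uu t ≠ 0 := hUu.continuousAt.eventually_ne hUu0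
      filter_upwards [he, hfact, Filter.eventually_all.2 hwfact, hU] with t ht hft hwt hUt
      rw [ht, ← Finset.sum_filter_add_sum_filter_not Finset.univ P]
      congr 1
      rw [← Finset.sum_fiberwise_of_maps_to (g := J₂)
        (fun i _ => Finset.mem_univ (J₂ i)) (fun i => a i t • g i (φ t))]
      refine Finset.sum_congr rfl fun j'' _ => ?_
      rw [Finset.filter_filter, Finset.sum_smul]
      refine Finset.sum_congr rfl fun i hi => ?_
      obtain ⟨hiP, hiJ⟩ := (Finset.mem_filter.1 hi).2
      have hgi : g i = fun z => (z.2 (J₁ i) - f z.1 (J₁ i)) • dyF F (J₂ i) z :=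
        (hJ i).resolve_left hiP
      rw [hgi]
      simp only
      rw [hwt (J₁ i), hft, hiJ, smul_smul, smul_smul]
      congr 1
      field_simp
  -- the closed linear system for the `v j = (mono α₀ • dyF j) ∘ φ`
  have memJ : ∀ j : Fin k, (fun z => mono α₀ z.1 • dyF F j z) ∈ mnPow r (JMyS F) :=
    fun j => ⟨α₀, hα₀, dyF F j, ⟨j, rfl⟩, rfl⟩
  choose nn cc hnn hcca hcc0 hsys using fun j => decomp _ (memJ j)
  obtain ⟨B, hB, hvB⟩ := solve_linear
    (fun j t => mono α₀ ((φ t).1) • dyF F j (φ t)) nn (fun j j'' => cc j j'')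
    (fun q q' => hcca q q') (fun q q' => hcc0 q q') (fun q => hsys q)
  have hv : ∀ j'', MemPB (mnPow 1 (JMPS F f)) φ
      (fun t => mono α₀ ((φ t).1) • dyF F j'' (φ t)) := by
    intro j
    refine memPB_congr ?_ (memPB_sum Finset.univ (fun j'' t => B j j'' t • nn j'' t)
      (fun j'' _ => memPB_smul (hB j j'') (hnn j'')))
    exact (hvB j).mono fun t ht => ht.symm
  -- conclude for the given generator
  obtain ⟨nn₀, c₀, hnn₀, hc₀a, _, hsys₀⟩ := decomp _ ⟨α, hα, dyF F j0, ⟨j0, rfl⟩, rfl⟩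
  refine memPB_congr ?_ (memPB_add hnn₀ (memPB_sum Finset.univ
    (fun j'' t => c₀ j'' t • (mono α₀ ((φ t).1) • dyF F j'' (φ t)))
    (fun j'' _ => memPB_smul (hc₀a j'') (hv j''))))
  exact hsys₀.mono fun t ht => ht.symm

end Helpers

/-- **Lemma 2.9.**  With `X = F⁻¹(0)`, `Y = {0}×𝕜^k`, `W` the rank-`c` locus of `X − Y`,
`P = Γ(f)`, let `φ(t) = (x(t),y(t))` be an analytic curve in `W` (for `t ≠ 0`) through `0`
satisfying `|y(t) − f(x(t))| = o(|x(t)|^r)`.  Then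
`φ*(m_n^{r-1} JM_y(F)) ⊆ φ*(JM(F)_P)` (if `r ≥ 1`), resp.
`φ*(JM_y(F)) ⊆ φ*(m_n JM(F)_P)` (if `r = 0`), holds iff
`φ*(m_n^r JM_y(F)) ⊆ φ*(m_n JM(F)_P + I(P) JM_y(F))`. -/
theorem statement4 {n k p : ℕ} (r : ℕ) (c : ℕ)
    (U : Set (Em 𝕜 n × Em 𝕜 k)) (hUopen : IsOpen U) (hU0 : (0 : Em 𝕜 n × Em 𝕜 k) ∈ U)
    (F : Em 𝕜 n × Em 𝕜 k → Em 𝕜 p) (hF : AnalyticOnNhd 𝕜 F U)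
    (f : Em 𝕜 n → Em 𝕜 k) (hf : AnalyticAt 𝕜 f 0) (hf0 : f 0 = 0)
    (X W : Set (Em 𝕜 n × Em 𝕜 k))
    (hX : X = {z ∈ U | F z = 0})
    (hW : W = {z ∈ X | z.1 ≠ 0 ∧
      Module.finrank 𝕜 (LinearMap.range (fderiv 𝕜 F z : Em 𝕜 n × Em 𝕜 k →ₗ[𝕜] Em 𝕜 p)) = c})
    (φ : 𝕜 → Em 𝕜 n × Em 𝕜 k) (hφ : AnalyticAt 𝕜 φ 0) (hφ0 : φ 0 = 0)
    (hφW : ∀ᶠ t in 𝓝[≠] (0 : 𝕜), φ t ∈ W)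
    (hjet : (fun t => (φ t).2 - f ((φ t).1)) =o[𝓝 (0 : 𝕜)] (fun t => ‖(φ t).1‖ ^ r)) :
    (1 ≤ r →
      ((∀ h ∈ mnPow (r - 1) (JMyS F), MemPB (JMPS F f) φ (fun t => h (φ t))) ↔
       (∀ h ∈ mnPow r (JMyS F),
          MemPB (mnPow 1 (JMPS F f) ∪ IPJMy F f) φ (fun t => h (φ t))))) ∧
    (r = 0 →
      ((∀ h ∈ JMyS F, MemPB (mnPow 1 (JMPS F f)) φ (fun t => h (φ t))) ↔
       (∀ h ∈ mnPow 0 (JMyS F),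
          MemPB (mnPow 1 (JMPS F f) ∪ IPJMy F f) φ (fun t => h (φ t))))) := by
  classical
  -- basic analyticity facts
  have hφ1 : AnalyticAt 𝕜 (fun t => (φ t).1) 0 := analyticAt_fst.comp hφ
  have hφ2 : AnalyticAt 𝕜 (fun t => (φ t).2) 0 := analyticAt_snd.comp hφ
  have hx : ∀ l, AnalyticAt 𝕜 (fun t => (φ t).1 l) 0 := fun l => analyticAt_pi_iff.1 hφ1 l
  have hφ10 : (φ 0).1 = 0 := by rw [hφ0]; rfl
  have hdFφ : AnalyticAt 𝕜 (fun t => fderiv 𝕜 F (φ t)) 0 := by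
    have h1 : AnalyticAt 𝕜 (fderiv 𝕜 F) (φ 0) := by rw [hφ0]; exact (hF 0 hU0).fderiv
    exact h1.comp hφ
  have hdyF : ∀ j, AnalyticAt 𝕜 (fun t => dyF F j (φ t)) 0 :=
    fun j => analyticAt_clm_apply hdFφ analyticAt_const
  have hdfφ : AnalyticAt 𝕜 (fun t => fderiv 𝕜 f ((φ t).1)) 0 := by
    have h1 : AnalyticAt 𝕜 (fderiv 𝕜 f) ((φ 0).1) := by rw [hφ10]; exact hf.fderiv
    exact h1.comp (f := fun t => (φ t).1) hφ1
  have hJMP : ∀ i, AnalyticAt 𝕜 (fun t => JMPgen F f i (φ t)) 0 :=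
    fun i => analyticAt_clm_apply hdFφ
      (analyticAt_const.prod (analyticAt_clm_apply hdfφ analyticAt_const))
  have hmono : ∀ β : Fin n → ℕ, AnalyticAt 𝕜 (fun t => mono β ((φ t).1)) 0 := by
    intro β
    have h1 : AnalyticAt 𝕜 (fun t => ∏ l, ((φ t).1 l) ^ (β l)) 0 :=
      Finset.analyticAt_fun_prod _ fun l _ => (hx l).pow (β l)
    exact h1
  have hfφ : AnalyticAt 𝕜 (fun t => f ((φ t).1)) 0 := by
    have h1 : AnalyticAt 𝕜 f ((φ 0).1) := by rw [hφ10]; exact hf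
    exact h1.comp (f := fun t => (φ t).1) hφ1
  have hyf : ∀ j, AnalyticAt 𝕜 (fun t => (φ t).2 j - f ((φ t).1) j) 0 :=
    fun j => (analyticAt_pi_iff.1 hφ2 j).sub (analyticAt_pi_iff.1 hfφ j)
  have hyf0 : ∀ j, (φ 0).2 j - f ((φ 0).1) j = 0 := by
    intro j
    rw [hφ10, hf0, hφ0]
    simp
  constructor
  · -- case r ≥ 1
    intro hr
    constructor
    · -- forward direction
      intro H h hh
      obtain ⟨α, hα, g0, ⟨j, rfl⟩, rfl⟩ := hh
      have hα' : ∑ l, α l = (r - 1) + 1 := by omega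
      obtain ⟨l, β, hβ, hαβ⟩ := exists_decomp hα'
      subst hαβ
      obtain ⟨m, a, g, ha, hg, he⟩ := H _ ⟨β, hβ, dyF F j, ⟨j, rfl⟩, rfl⟩
      refine memPB_mono Set.subset_union_left
        ⟨m, a, fun i => fun z => mono (Pi.single l 1) z.1 • g i z, ha,
          fun i => ⟨Pi.single l 1, sum_single l 1, g i, hg i, rfl⟩, ?_⟩
      filter_upwards [he] with t ht
      have ht' : mono β ((φ t).1) • dyF F j (φ t) = ∑ i, a i t • g i (φ t) := ht
      show mono (β + Pi.single l 1) ((φ t).1) • dyF F j (φ t) = _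
      calc mono (β + Pi.single l 1) ((φ t).1) • dyF F j (φ t)
          = (φ t).1 l • (mono β ((φ t).1) • dyF F j (φ t)) := by
            rw [mono_add, mono_single, pow_one, smul_smul, mul_comm]
        _ = (φ t).1 l • ∑ i, a i t • g i (φ t) := by rw [ht']
        _ = ∑ i, a i t • ((fun z => mono (Pi.single l 1) z.1 • g i z) (φ t)) := by
            rw [Finset.smul_sum]
            refine Finset.sum_congr rfl fun i _ => ?_
            simp only [mono_single, pow_one]
            rw [smul_comm]
    · -- reverse direction
      intro H
      -- Step 1: a coordinate of minimal vanishing order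
      have hS : ∃ l, ¬ ((fun t => (φ t).1 l) =ᶠ[𝓝 (0:𝕜)] (fun _ => (0:𝕜))) := by
        by_contra hc
        push_neg at hc
        have h1 : ∀ᶠ t in 𝓝 (0:𝕜), ∀ l, (φ t).1 l = 0 :=
          Filter.eventually_all.2 fun l => hc l
        have h2 : ∀ᶠ t in 𝓝[≠] (0:𝕜), (φ t).1 = 0 := by
          apply Filter.Eventually.filter_mono nhdsWithin_le_nhds
          filter_upwards [h1] with t ht
          funext l
          exact ht l
        have h3 : ∀ᶠ t in 𝓝[≠] (0:𝕜), (φ t).1 ≠ 0 := by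
          filter_upwards [hφW] with t ht
          rw [hW] at ht
          exact ht.2.1
        obtain ⟨t, h4, h5⟩ := (h2.and h3).exists
        exact h5 h4
      set S : Finset (Fin n) :=
        Finset.univ.filter
          (fun l => ¬ ((fun t => (φ t).1 l) =ᶠ[𝓝 (0:𝕜)] (fun _ => (0:𝕜)))) with hSdef
      have hSne : S.Nonempty :=
        hS.imp fun l hl => Finset.mem_filter.2 ⟨Finset.mem_univ l, hl⟩
      set ord : Fin n → ℕ := fun l => (analyticOrderAt (fun t => (φ t).1 l) 0).toNat with horddef
      obtain ⟨l₀, hl₀S, hl₀min⟩ := Finset.exists_min_image S ord hSne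
      have hfac : ∀ l ∈ S, ∃ uu : 𝕜 → 𝕜, AnalyticAt 𝕜 uu 0 ∧ uu 0 ≠ 0 ∧
          ∀ᶠ t in 𝓝 (0:𝕜), (φ t).1 l = t ^ (ord l) * uu t := by
        intro l hl
        have hne0 : ¬ ((fun t => (φ t).1 l) =ᶠ[𝓝 (0:𝕜)] (fun _ => (0:𝕜))) :=
          (Finset.mem_filter.1 hl).2
        have hnetop : analyticOrderAt (fun t => (φ t).1 l) 0 ≠ ⊤ := fun hh => hne0 (analyticOrderAt_eq_top.1 hh)
        have horder : analyticOrderAt (fun t => (φ t).1 l) 0 = (ord l : ℕ∞) := (ENat.coe_toNat hnetop).symm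
        obtain ⟨uu, h1, h2, h3⟩ := ((hx l).analyticOrderAt_eq_natCast (n := ord l)).1 horder
        refine ⟨uu, h1, h2, ?_⟩
        filter_upwards [h3] with t ht
        rw [ht]
        simp [smul_eq_mul]
      obtain ⟨u, hu, hu0, hufac⟩ := hfac l₀ hl₀S
      have hune : ∀ᶠ t in 𝓝 (0:𝕜), u t ≠ 0 := hu.continuousAt.eventually_ne hu0
      -- Step 2: ‖x(t)‖ = O(t^d)
      have hsmall : ∀ᶠ t : 𝕜 in 𝓝 0, ‖t‖ ≤ 1 := by
        have hmem : Metric.closedBall (0 : 𝕜) 1 ∈ 𝓝 (0 : 𝕜) :=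
          Metric.closedBall_mem_nhds _ one_pos
        filter_upwards [hmem] with t ht
        simpa using ht
      have hcoord : ∀ l, (fun t => (φ t).1 l) =O[𝓝 (0:𝕜)] (fun t => ‖t‖ ^ (ord l₀)) := by
        intro l
        by_cases hl : l ∈ S
        · obtain ⟨uu, h1, h2, h3⟩ := hfac l hl
          have hbound : ∀ᶠ t in 𝓝 (0:𝕜), ‖uu t‖ < ‖uu 0‖ + 1 :=
            Filter.Tendsto.eventually_lt_const (lt_add_one ‖uu 0‖) h1.continuousAt.norm
          refine Asymptotics.IsBigO.of_bound (‖uu 0‖ + 1) ?_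
          filter_upwards [h3, hbound, hsmall] with t h4 h5 h6
          rw [h4, norm_mul, norm_pow, Real.norm_of_nonneg (pow_nonneg (norm_nonneg t) _)]
          have e1 : ‖t‖ ^ ord l ≤ ‖t‖ ^ ord l₀ :=
            pow_le_pow_of_le_one (norm_nonneg t) h6 (hl₀min l hl)
          calc ‖t‖ ^ ord l * ‖uu t‖ ≤ ‖t‖ ^ ord l₀ * (‖uu 0‖ + 1) :=
                mul_le_mul e1 h5.le (norm_nonneg _) (pow_nonneg (norm_nonneg t) _)
            _ = (‖uu 0‖ + 1) * ‖t‖ ^ ord l₀ := mul_comm _ _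
        · have hz : (fun t => (φ t).1 l) =ᶠ[𝓝 (0:𝕜)] (fun _ => (0:𝕜)) := by
            by_contra hcc
            exact hl (Finset.mem_filter.2 ⟨Finset.mem_univ l, hcc⟩)
          exact hz.trans_isBigO (Asymptotics.isBigO_zero _ _)
      have hbig : (fun t => ‖(φ t).1‖) =O[𝓝 (0:𝕜)] (fun t => ‖t‖ ^ (ord l₀)) := by
        have hbigv : (fun t => (φ t).1) =O[𝓝 (0:𝕜)] (fun t => ‖t‖ ^ (ord l₀)) :=
          Asymptotics.isBigO_pi.2 hcoord
        exact hbigv.norm_left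
      -- Step 3: componentwise jet condition, with factorization
      have hcomp : ∀ j, (fun t => (φ t).2 j - f ((φ t).1) j) =o[𝓝 (0:𝕜)]
          (fun t => ‖t‖ ^ (ord l₀ * r)) := by
        intro j
        have h1 : (fun t => (φ t).2 j - f ((φ t).1) j) =O[𝓝 (0:𝕜)]
            (fun t => (φ t).2 - f ((φ t).1)) := by
          refine Asymptotics.IsBigO.of_bound 1 ?_
          filter_upwards with t
          rw [one_mul]
          exact norm_le_pi_norm ((φ t).2 - f ((φ t).1)) j
        have h2 := (h1.trans_isLittleO hjet).trans_isBigO (hbig.pow r)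
        have h3 : (fun t : 𝕜 => (‖t‖ ^ ord l₀) ^ r) = fun t => ‖t‖ ^ (ord l₀ * r) := by
          funext t
          rw [← pow_mul]
        rwa [h3] at h2
      choose w hwA hw0 hwfact using
        fun j => exists_factor_littleO (hyf j) (ord l₀ * r) (hcomp j)
      -- Step 4: the core argument
      have hfact0 : ∀ᶠ t in 𝓝 (0:𝕜),
          mono (Pi.single l₀ r) ((φ t).1) = t ^ (ord l₀ * r) * (u t) ^ r := by
        filter_upwards [hufac] with t ht
        rw [mono_single, ht, mul_pow, ← pow_mul]
      have Hcore := reverse_core r F f φ (Pi.single l₀ r) (sum_single l₀ r)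
        (ord l₀ * r) (fun t => (u t) ^ r) (hu.pow r) (pow_ne_zero r hu0) hfact0
        w hwA hw0 hwfact H
      -- Step 5: divide by the coordinate of minimal order
      intro h hh
      obtain ⟨β, hβ, g0, ⟨j, rfl⟩, rfl⟩ := hh
      have hmem' : (fun z => mono (β + Pi.single l₀ 1) z.1 • dyF F j z) ∈
          mnPow r (JMyS F) := by
        refine ⟨β + Pi.single l₀ 1, ?_, dyF F j, ⟨j, rfl⟩, rfl⟩
        have e1 : ∑ l, (β + Pi.single l₀ 1 : Fin n → ℕ) l = (∑ l, β l) + ∑ l, (Pi.single l₀ 1 : Fin n → ℕ) l := by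
          rw [← Finset.sum_add_distrib]
          rfl
        rw [e1, hβ, sum_single]
        omega
      obtain ⟨m, a, g, ha, hg, he⟩ := Hcore _ hmem'
      have hgdec : ∀ i, ∃ (l : Fin n) (i' : Fin n),
          g i = fun z => mono (Pi.single l 1) z.1 • JMPgen F f i' z := by
        intro i
        obtain ⟨γ, hγ, G, ⟨i', rfl⟩, hEq⟩ := hg i
        obtain ⟨l, rfl⟩ := sum_eq_one_single hγ
        exact ⟨l, i', hEq⟩
      choose lI iI hgI using hgdec
      have hfacall : ∀ l, ∃ uu : 𝕜 → 𝕜, AnalyticAt 𝕜 uu 0 ∧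
          (l ∈ S → ∀ᶠ t in 𝓝 (0:𝕜), (φ t).1 l = t ^ (ord l) * uu t) := by
        intro l
        by_cases hl : l ∈ S
        · obtain ⟨uu, h1, _, h3⟩ := hfac l hl
          exact ⟨uu, h1, fun _ => h3⟩
        · exact ⟨fun _ => 0, analyticAt_const, fun hc => absurd hc hl⟩
      choose uu huu huufac using hfacall
      set b : Fin m → 𝕜 → 𝕜 := fun i t =>
        if lI i ∈ S then a i t * (t ^ (ord (lI i) - ord l₀) * uu (lI i) t * (u t)⁻¹)
        else 0 with hbdef
      have hb : ∀ i, AnalyticAt 𝕜 (b i) 0 := by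
        intro i
        by_cases hc : lI i ∈ S
        · simp only [hbdef, if_pos hc]
          exact (ha i).mul (((analyticAt_id.pow _).mul (huu (lI i))).mul (hu.inv hu0))
        · simp only [hbdef, if_neg hc]
          exact analyticAt_const
      have hbkey : ∀ i, ∀ᶠ t in 𝓝 (0:𝕜),
          a i t * (φ t).1 (lI i) = b i t * (φ t).1 l₀ := by
        intro i
        by_cases hc : lI i ∈ S
        · filter_upwards [huufac (lI i) hc, hufac, hune] with t h1 h2 h3
          rw [h1, h2]
          simp only [hbdef, if_pos hc]
          have e1 : t ^ (ord (lI i) - ord l₀) * t ^ (ord l₀) = t ^ (ord (lI i)) := by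
            rw [← pow_add, Nat.sub_add_cancel (hl₀min (lI i) hc)]
          calc a i t * (t ^ ord (lI i) * uu (lI i) t)
              = a i t * ((t ^ (ord (lI i) - ord l₀) * t ^ ord l₀) * uu (lI i) t) := by
                rw [e1]
            _ = a i t * (t ^ (ord (lI i) - ord l₀) * uu (lI i) t * (u t)⁻¹) *
                (t ^ ord l₀ * u t) := by
                field_simp
        · have hz : ∀ᶠ t in 𝓝 (0:𝕜), (φ t).1 (lI i) = 0 := by
            have h1 : ¬¬ ((fun t => (φ t).1 (lI i)) =ᶠ[𝓝 (0:𝕜)] fun _ => (0:𝕜)) :=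
              fun hcc => hc (Finset.mem_filter.2 ⟨Finset.mem_univ _, hcc⟩)
            exact not_not.1 h1
          filter_upwards [hz] with t h1
          rw [h1]
          simp [hbdef, if_neg hc]
      have hxl₀ne : ∀ᶠ t in 𝓝[≠] (0:𝕜), (φ t).1 l₀ ≠ 0 := by
        rw [eventually_nhdsWithin_iff]
        filter_upwards [hufac, hune] with t h1 h2 ht0
        rw [h1]
        exact mul_ne_zero (pow_ne_zero _ (by simpa using ht0)) h2
      have hpointE : ∀ᶠ t in 𝓝 (0:𝕜),
          (φ t).1 l₀ • (mono β ((φ t).1) • dyF F j (φ t)) =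
          (φ t).1 l₀ • (∑ i, b i t • JMPgen F f (iI i) (φ t)) := by
        filter_upwards [he, Filter.eventually_all.2 hbkey] with t h1 h2
        have e0 : (φ t).1 l₀ • (mono β ((φ t).1) • dyF F j (φ t)) =
            mono (β + Pi.single l₀ 1) ((φ t).1) • dyF F j (φ t) := by
          rw [mono_add, mono_single, pow_one, smul_smul, mul_comm]
        rw [e0]
        have h1' : mono (β + Pi.single l₀ 1) ((φ t).1) • dyF F j (φ t) =
            ∑ i, a i t • g i (φ t) := h1
        rw [h1', Finset.smul_sum]
        refine Finset.sum_congr rfl fun i _ => ?_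
        rw [hgI i]
        show a i t • (mono (Pi.single (lI i) 1) ((φ t).1) • JMPgen F f (iI i) (φ t)) =
          (φ t).1 l₀ • b i t • JMPgen F f (iI i) (φ t)
        rw [mono_single, pow_one, smul_smul, smul_smul, h2 i, mul_comm]
      have hpunct : ∀ᶠ t in 𝓝[≠] (0:𝕜), mono β ((φ t).1) • dyF F j (φ t) =
          ∑ i, b i t • JMPgen F f (iI i) (φ t) := by
        filter_upwards [hpointE.filter_mono nhdsWithin_le_nhds, hxl₀ne] with t h1 h2
        exact smul_right_injective (Em 𝕜 p) h2 h1
      have hana1 : AnalyticAt 𝕜 (fun t => mono β ((φ t).1) • dyF F j (φ t)) 0 :=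
        (hmono β).smul (hdyF j)
      have hana2 : AnalyticAt 𝕜 (fun t => ∑ i, b i t • JMPgen F f (iI i) (φ t)) 0 :=
        Finset.analyticAt_fun_sum _ fun i _ => (hb i).smul (hJMP (iI i))
      have hev : (fun t => mono β ((φ t).1) • dyF F j (φ t)) =ᶠ[𝓝 (0:𝕜)]
          (fun t => ∑ i, b i t • JMPgen F f (iI i) (φ t)) :=
        (hana1.frequently_eq_iff_eventually_eq hana2).1 hpunct.frequently
      exact ⟨m, b, fun i => JMPgen F f (iI i), hb, fun i => ⟨iI i, rfl⟩, hev⟩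
  · -- case r = 0
    intro hr0
    subst hr0
    constructor
    · -- forward direction
      intro H h hh
      obtain ⟨α, hα, g0, ⟨j, rfl⟩, rfl⟩ := hh
      have hα0 : α = 0 := by
        funext l
        have h1 := Finset.sum_eq_zero_iff.1 hα l (Finset.mem_univ l)
        simpa using h1
      subst hα0
      refine memPB_mono Set.subset_union_left (memPB_congr ?_ (H (dyF F j) ⟨j, rfl⟩))
      filter_upwards with t
      simp [mono_zero]
    · -- reverse direction
      intro H h hh
      obtain ⟨j, rfl⟩ := hh
      have Hcore := reverse_core 0 F f φ 0 (by simp) 0 (fun _ => (1:𝕜)) analyticAt_const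
        one_ne_zero (by filter_upwards with t; simp [mono_zero])
        (fun j' t => (φ t).2 j' - f ((φ t).1) j') hyf (fun j' => hyf0 j')
        (fun j' => by filter_upwards with t; simp) H
      have h1 := Hcore (fun z => mono (0 : Fin n → ℕ) z.1 • dyF F j z)
        ⟨0, by simp, dyF F j, ⟨j, rfl⟩, rfl⟩
      refine memPB_congr ?_ h1
      filter_upwards with t
      simp [mono_zero]


end
end
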